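/- Let R be an integrable real-valued random variable on a probability space whose distribution is symmetric about Q ∈ ℝ (that is, R − Q and Q − R have the same distribution), and let d ≥ 0. Then the expectation of the clamp of R to the interval [Q − d, Q + d] equals Q, i.e. E[max(Q − d, min(Q + d, R))] = Q. -/

import Mathlib

open MeasureTheory

/-- If `R` is an integrable real random variable whose distribution is
symmetric about `Q` (i.e. `R - Q` and `Q - R` have the same distribution) and `d ≥ 0`,
then the expectation of the clamp of `R` to `[Q - d, Q + d]` equals `Q`. -/
theorem expectation_clamp_symmetric
    {Ω : Type*} [MeasurableSpace Ω] (μ : Measure Ω) [IsProbabilityMeasure μ]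
    (R : Ω → ℝ) (hmeas : Measurable R) (hint : Integrable R μ)
    (Q d : ℝ) (hd : 0 ≤ d)
    (hsym : μ.map (fun ω => R ω - Q) = μ.map (fun ω => Q - R ω)) :
    ∫ ω, max (Q - d) (min (Q + d) (R ω)) ∂μ = Q := by
  set g : ℝ → ℝ := fun x => max (-d) (min d x) with hg
  have hgm : Measurable g := measurable_const.max (measurable_const.min measurable_id)
  have hgodd : ∀ x, g (-x) = - g x := by
    intro x
    simp only [hg, min_def, max_def]
    split_ifs <;> linarith
  have hgbound : ∀ x, |g x| ≤ d := by
    intro x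
    rw [abs_le]
    constructor
    · exact le_max_left _ _
    · exact max_le (by linarith) (min_le_left _ _)
  have hint2 : Integrable (fun ω => g (R ω - Q)) μ := by
    apply Integrable.mono' (integrable_const d)
      ((hgm.comp (hmeas.sub measurable_const)).aestronglyMeasurable)
    filter_upwards with ω using hgbound _
  have h1 : ∫ ω, g (R ω - Q) ∂μ = ∫ ω, g (Q - R ω) ∂μ := by
    rw [← integral_map (show Measurable (fun ω => R ω - Q) from hmeas.sub measurable_const).aemeasurable hgm.aestronglyMeasurable,
      hsym, integral_map (show Measurable (fun ω => Q - R ω) from measurable_const.sub hmeas).aemeasurable hgm.aestronglyMeasurable]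
  have h2 : ∫ ω, g (Q - R ω) ∂μ = - ∫ ω, g (R ω - Q) ∂μ := by
    rw [← integral_neg]
    congr 1
    funext ω
    rw [← hgodd]
    ring_nf
  have h0 : ∫ ω, g (R ω - Q) ∂μ = 0 := by linarith [h1.trans h2]
  have key : (fun ω => max (Q - d) (min (Q + d) (R ω))) = fun ω => Q + g (R ω - Q) := by
    funext ω
    simp only [hg]
    have h3 : Q + (R ω - Q) = R ω := by ring
    rw [← max_add_add_left, ← min_add_add_left, h3, ← sub_eq_add_neg]
  rw [key, integral_add (integrable_const Q) hint2, h0, integral_const]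
  simp
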